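/- Let X be a Banach space and let (A_m)_{m≥0} be a sequence of bounded linear operators on X admitting an exponential dichotomy on ℤ₀⁺ with constants C, λ > 0. Then there exists c₀ > 0 (depending only on C and λ) such that whenever f_n : X → X (n ≥ 0) satisfy ‖f_n(x) − f_n(y)‖ ≤ c‖x − y‖ for all n ≥ 0 and x, y ∈ X with 0 < c ≤ c₀, the system x_{n+1} = F_n(x_n), n ≥ 0 (where F_n = A_n + f_n) has the ℓ^∞-shadowing property: for every ε > 0 there exists δ > 0 such that every sequence (y_n)_{n≥0} ⊂ X with sup_{n≥0} ‖y_{n+1} − F_n(y_n)‖ ≤ δ admits a sequence (x_n)_{n≥0} with x_{n+1} = F_n(x_n) for all n ≥ 0 and sup_{n≥0} ‖x_n − y_n‖ ≤ ε. -/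

import Mathlib

/-- The forward products `𝒜(m,n) = A_{m-1} ⋯ A_n` for `m ≥ n ≥ 0`
(equal to the identity when `m ≤ n`). -/
noncomputable def calAN {X : Type*} [NormedAddCommGroup X] [NormedSpace ℝ X]
    (A : ℕ → X →L[ℝ] X) (m n : ℕ) : X →L[ℝ] X :=
  (List.range (m - n)).foldl (fun B k => (A (n + k)).comp B)
    (ContinuousLinearMap.id ℝ X)

set_option linter.unusedSectionVars false

namespace Shadow

variable {X : Type*} [NormedAddCommGroup X] [NormedSpace ℝ X]

theorem calAN_self (A : ℕ → X →L[ℝ] X) (n : ℕ) :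
    calAN A n n = ContinuousLinearMap.id ℝ X := by
  simp [calAN]

theorem calAN_succ_top (A : ℕ → X →L[ℝ] X) {m n : ℕ} (h : n ≤ m) :
    calAN A (m + 1) n = (A m).comp (calAN A m n) := by
  unfold calAN
  rw [Nat.succ_sub h, List.range_succ, List.foldl_append]
  simp [Nat.add_sub_cancel' h]

theorem calAN_succ_bot (A : ℕ → X →L[ℝ] X) {m n : ℕ} (h : n < m) :
    calAN A m n = (calAN A m (n + 1)).comp (A n) := by
  induction m, h using Nat.le_induction with
  | base =>
      rw [calAN_succ_top A le_rfl, calAN_self, calAN_self]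
      ext x; simp
  | succ m hm ih =>
      rw [calAN_succ_top A (Nat.le_of_succ_le hm), ih,
        calAN_succ_top A hm, ContinuousLinearMap.comp_assoc]



theorem geom_step_bound {C E a M : ℝ} (hC : 0 ≤ C) (hE0 : 0 ≤ E) (hE1 : E ≤ 1)
    (j : ℕ) (ha0 : 0 ≤ a) (ha : a ≤ M) : C * E ^ (j + 1) * a ≤ C * M * E ^ j := by
  have hp : 0 ≤ E ^ j := pow_nonneg hE0 j
  have hM0 : 0 ≤ M := le_trans ha0 ha
  have h1 : C * E ^ (j + 1) * a ≤ C * E ^ (j + 1) * M :=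
    mul_le_mul_of_nonneg_left ha (mul_nonneg hC (pow_nonneg hE0 _))
  have h2 : C * E ^ (j + 1) * M = (C * M * E ^ j) * E := by ring
  have h3 : (C * M * E ^ j) * E ≤ (C * M * E ^ j) * 1 :=
    mul_le_mul_of_nonneg_left hE1 (mul_nonneg (mul_nonneg hC hM0) hp)
  have h4 : (C * M * E ^ j) * 1 = C * M * E ^ j := mul_one _
  linarith

theorem geom_bound {C E a M : ℝ} (hC : 0 ≤ C) (hE0 : 0 ≤ E)
    (i : ℕ) (ha : a ≤ M) : C * E ^ i * a ≤ C * M * E ^ i := by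
  have hp : 0 ≤ E ^ i := pow_nonneg hE0 i
  have h1 := mul_le_mul_of_nonneg_left ha (mul_nonneg hC hp)
  calc C * E ^ i * a ≤ C * E ^ i * M := h1
    _ = C * M * E ^ i := by ring

noncomputable def PhiFun (A P : ℕ → X →L[ℝ] X) (V : ℕ → ℕ → X → X) (h : ℕ → X) (n : ℕ) : X :=
  (∑ k ∈ Finset.range n, calAN A n (k + 1) (P (k + 1) (h k))) -
    ∑' j : ℕ, V n (n + j + 1) (h (n + j))

variable {A P : ℕ → X →L[ℝ] X} {V : ℕ → ℕ → X → X} {C E : ℝ}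

theorem summable_tail [CompleteSpace X] (hC : 0 ≤ C) (hE0 : 0 ≤ E) (hE1 : E < 1)
    (hVb : ∀ n k, n ≤ k → ∀ x : X, ‖V n k x‖ ≤ C * E ^ (k - n) * ‖x‖)
    (h : ℕ → X) (M : ℝ) (hM : ∀ k, ‖h k‖ ≤ M) (n : ℕ) :
    Summable (fun j => V n (n + j + 1) (h (n + j))) := by
  have hM0 : 0 ≤ M := le_trans (norm_nonneg _) (hM 0)
  apply Summable.of_norm_bounded ((summable_geometric_of_lt_one hE0 hE1).mul_left (C * M))
  intro j
  have h1 := hVb n (n + j + 1) (by omega) (h (n + j))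
  have h2 : n + j + 1 - n = j + 1 := by omega
  rw [h2] at h1
  exact le_trans h1 (geom_step_bound hC hE0 hE1.le j (norm_nonneg _) (hM (n + j)))

theorem bound_Phi [CompleteSpace X] (hC : 0 ≤ C) (hE0 : 0 ≤ E) (hE1 : E < 1)
    (hVb : ∀ n k, n ≤ k → ∀ x : X, ‖V n k x‖ ≤ C * E ^ (k - n) * ‖x‖)
    (hSb : ∀ m n, n ≤ m → ∀ x : X, ‖calAN A m n (P n x)‖ ≤ C * E ^ (m - n) * ‖x‖)
    (h : ℕ → X) (M : ℝ) (hM : ∀ k, ‖h k‖ ≤ M) (n : ℕ) :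
    ‖PhiFun A P V h n‖ ≤ 2 * C / (1 - E) * M := by
  have hM0 : 0 ≤ M := le_trans (norm_nonneg _) (hM 0)
  have h1E : 0 < 1 - E := by linarith
  have hfin : ‖∑ k ∈ Finset.range n, calAN A n (k + 1) (P (k + 1) (h k))‖
      ≤ C * M * (1 - E)⁻¹ := by
    calc ‖∑ k ∈ Finset.range n, calAN A n (k + 1) (P (k + 1) (h k))‖
        ≤ ∑ k ∈ Finset.range n, ‖calAN A n (k + 1) (P (k + 1) (h k))‖ :=
          norm_sum_le _ _
      _ ≤ ∑ k ∈ Finset.range n, (C * M) * E ^ (n - (k + 1)) := by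
          apply Finset.sum_le_sum
          intro k hk
          have hkn : k + 1 ≤ n := Finset.mem_range.mp hk
          have h1 := hSb n (k + 1) hkn (h k)
          exact le_trans h1 (geom_bound hC hE0 _ (hM k))
      _ = (C * M) * ∑ k ∈ Finset.range n, E ^ (n - (k + 1)) := by
          rw [Finset.mul_sum]
      _ ≤ (C * M) * (1 - E)⁻¹ := by
          apply mul_le_mul_of_nonneg_left _ (by positivity)
          have hre : ∑ k ∈ Finset.range n, E ^ (n - (k + 1))
              = ∑ k ∈ Finset.range n, E ^ k := by
            rw [← Finset.sum_range_reflect (fun k => E ^ k) n]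
            apply Finset.sum_congr rfl
            intro k hk
            congr 1
            omega
          rw [hre, ← tsum_geometric_of_lt_one hE0 hE1]
          exact Summable.sum_le_tsum _ (fun i _ => pow_nonneg hE0 i)
            (summable_geometric_of_lt_one hE0 hE1)
  have htail : ‖∑' j : ℕ, V n (n + j + 1) (h (n + j))‖ ≤ C * M * (1 - E)⁻¹ := by
    have hgs : HasSum (fun j : ℕ => (C * M) * E ^ j) ((C * M) * (1 - E)⁻¹) :=
      (hasSum_geometric_of_lt_one hE0 hE1).mul_left _
    apply tsum_of_norm_bounded hgs
    intro j
    have h1 := hVb n (n + j + 1) (by omega) (h (n + j))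
    have h2 : n + j + 1 - n = j + 1 := by omega
    rw [h2] at h1
    exact le_trans h1 (geom_step_bound hC hE0 hE1.le j (norm_nonneg _) (hM (n + j)))
  calc ‖PhiFun A P V h n‖ ≤ ‖∑ k ∈ Finset.range n, calAN A n (k + 1) (P (k + 1) (h k))‖
        + ‖∑' j : ℕ, V n (n + j + 1) (h (n + j))‖ := norm_sub_le _ _
    _ ≤ C * M * (1 - E)⁻¹ + C * M * (1 - E)⁻¹ := add_le_add hfin htail
    _ = 2 * C / (1 - E) * M := by
        rw [div_eq_mul_inv]; ring

theorem sub_Phi [CompleteSpace X] (hC : 0 ≤ C) (hE0 : 0 ≤ E) (hE1 : E < 1)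
    (hVb : ∀ n k, n ≤ k → ∀ x : X, ‖V n k x‖ ≤ C * E ^ (k - n) * ‖x‖)
    (hVsub : ∀ n k, n ≤ k → ∀ x x' : X, V n k x - V n k x' = V n k (x - x'))
    (h h' : ℕ → X) (M M' : ℝ) (hM : ∀ k, ‖h k‖ ≤ M) (hM' : ∀ k, ‖h' k‖ ≤ M') (n : ℕ) :
    PhiFun A P V h n - PhiFun A P V h' n = PhiFun A P V (fun k => h k - h' k) n := by
  unfold PhiFun
  rw [sub_sub_sub_comm]
  congr 1
  · rw [← Finset.sum_sub_distrib]
    apply Finset.sum_congr rfl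
    intro k _
    rw [← map_sub, ← map_sub]
  · rw [← Summable.tsum_sub (summable_tail hC hE0 hE1 hVb h M hM n)
      (summable_tail hC hE0 hE1 hVb h' M' hM' n)]
    apply tsum_congr
    intro j
    exact hVsub n (n + j + 1) (by omega) _ _

theorem rec_Phi [CompleteSpace X] (hC : 0 ≤ C) (hE0 : 0 ≤ E) (hE1 : E < 1)
    (hVb : ∀ n k, n ≤ k → ∀ x : X, ‖V n k x‖ ≤ C * E ^ (k - n) * ‖x‖)
    (hVstep : ∀ n k, n + 1 ≤ k → ∀ x : X, A n (V n k x) = V (n + 1) k x)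
    (hVtop : ∀ n, ∀ x : X, A n (V n (n + 1) x) = x - P (n + 1) x)
    (h : ℕ → X) (M : ℝ) (hM : ∀ k, ‖h k‖ ≤ M) (n : ℕ) :
    PhiFun A P V h (n + 1) = A n (PhiFun A P V h n) + h n := by
  have hsum := summable_tail hC hE0 hE1 hVb h M hM n
  have e1 : A n (∑ k ∈ Finset.range n, calAN A n (k + 1) (P (k + 1) (h k)))
      = ∑ k ∈ Finset.range n, calAN A (n + 1) (k + 1) (P (k + 1) (h k)) := by
    rw [map_sum]
    apply Finset.sum_congr rfl
    intro k hk
    rw [calAN_succ_top A (Finset.mem_range.mp hk)]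
    rfl
  have hsum2 : Summable (fun j => A n (V n (n + j + 1) (h (n + j)))) :=
    hsum.map (A n) (A n).continuous
  have e2 : A n (∑' j : ℕ, V n (n + j + 1) (h (n + j)))
      = (h n - P (n + 1) (h n)) + ∑' j : ℕ, V (n + 1) (n + 1 + j + 1) (h (n + 1 + j)) := by
    rw [ContinuousLinearMap.map_tsum _ hsum, Summable.tsum_eq_zero_add hsum2]
    congr 1
    · simpa using hVtop n (h n)
    · apply tsum_congr
      intro j
      rw [hVstep n (n + (j + 1) + 1) (by omega),
        show n + (j + 1) + 1 = n + 1 + j + 1 by omega,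
        show n + (j + 1) = n + 1 + j by omega]
  unfold PhiFun
  rw [map_sub, e1, e2, Finset.sum_range_succ, calAN_self]
  simp only [ContinuousLinearMap.id_apply]
  abel

end Shadow

open Shadow BoundedContinuousFunction

/-- The sequence `(A_m)_{m ≥ 0}` admits an exponential dichotomy on `ℤ₀⁺` with constants
`C, lam > 0`.  For `m ≤ n`, the operator `𝒜(m,n)` (the inverse of `𝒜(n,m)` restricted to
`Ker P_m`) is described implicitly: `w = 𝒜(m,n)(Id - P_n) x` iff `w ∈ Ker P_m` and
`𝒜(n,m) w = x - P_n x`. -/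
def ExpDichotomyN {X : Type*} [NormedAddCommGroup X] [NormedSpace ℝ X]
    (A : ℕ → X →L[ℝ] X) (C lam : ℝ) : Prop :=
  ∃ P : ℕ → X →L[ℝ] X,
    (∀ m, (P m).comp (P m) = P m) ∧
    (∀ m, (P (m + 1)).comp (A m) = (A m).comp (P m)) ∧
    (∀ m, Set.BijOn (A m) (LinearMap.ker (P m : X →ₗ[ℝ] X) : Set X)
      (LinearMap.ker (P (m + 1) : X →ₗ[ℝ] X) : Set X)) ∧
    (∀ m n : ℕ, n ≤ m → ‖(calAN A m n).comp (P n)‖ ≤ C * Real.exp (-lam * ((m : ℝ) - n))) ∧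
    (∀ m n : ℕ, m ≤ n → ∀ x w : X, w ∈ LinearMap.ker (P m : X →ₗ[ℝ] X) →
      calAN A n m w = x - P n x → ‖w‖ ≤ C * Real.exp (-lam * ((n : ℝ) - m)) * ‖x‖)

/-- Theorem 4.1: if `(A_m)_{m≥0}` admits an exponential dichotomy on `ℤ₀⁺` then, whenever the
Lipschitz constants of the perturbations `f_n` are sufficiently small, the system
`x_{n+1} = A_n x_n + f_n(x_n)`, `n ≥ 0`, has the `ℓ^∞`-shadowing property. -/
theorem one_sided_shadowing
    {X : Type*} [NormedAddCommGroup X] [NormedSpace ℝ X] [CompleteSpace X]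
    (A : ℕ → X →L[ℝ] X) (C lam : ℝ) (hC : 0 < C) (hlam : 0 < lam)
    (h : ExpDichotomyN A C lam) :
    ∃ c₀ : ℝ, 0 < c₀ ∧ ∀ c : ℝ, 0 < c → c ≤ c₀ →
      ∀ f : ℕ → X → X, (∀ n : ℕ, ∀ x y : X, ‖f n x - f n y‖ ≤ c * ‖x - y‖) →
      ∀ ε : ℝ, 0 < ε → ∃ δ : ℝ, 0 < δ ∧ ∀ y : ℕ → X,
        (∀ n : ℕ, ‖y (n + 1) - (A n (y n) + f n (y n))‖ ≤ δ) →
        ∃ x : ℕ → X, (∀ n : ℕ, x (n + 1) = A n (x n) + f n (x n)) ∧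
          ∀ n : ℕ, ‖x n - y n‖ ≤ ε := by
  obtain ⟨P, hP, hPA, hbij, hS, hV5⟩ := h
  set E : ℝ := Real.exp (-lam) with hEdef
  have hE0 : 0 < E := Real.exp_pos _
  have hE1 : E < 1 := by
    rw [hEdef]
    rw [Real.exp_lt_one_iff]
    linarith
  have h1E : 0 < 1 - E := by linarith
  -- convert the exponential bounds into powers of E
  have hexp : ∀ a b : ℕ, a ≤ b →
      C * Real.exp (-lam * ((b : ℝ) - a)) = C * E ^ (b - a) := by
    intro a b hab
    congr 1
    have hcast : ((b : ℝ) - a) = ((b - a : ℕ) : ℝ) := by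
      rw [Nat.cast_sub hab]
    rw [hcast, mul_comm, Real.exp_nat_mul]
  -- projection facts
  have hPP : ∀ k (x : X), P k (P k x) = P k x := by
    intro k x
    have := congrArg (fun T : X →L[ℝ] X => T x) (hP k)
    simpa using this
  have hker : ∀ k (x : X), x - P k x ∈ LinearMap.ker (P k : X →ₗ[ℝ] X) := by
    intro k x
    simp [LinearMap.mem_ker, map_sub, hPP k x]
  -- products are bijections between kernels
  have hbijMN : ∀ n m : ℕ, n ≤ m → Set.BijOn (calAN A m n)
      (LinearMap.ker (P n : X →ₗ[ℝ] X) : Set X) (LinearMap.ker (P m : X →ₗ[ℝ] X) : Set X) := by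
    intro n m hnm
    induction m, hnm using Nat.le_induction with
    | base =>
        rw [calAN_self]
        simpa using Set.bijOn_id (LinearMap.ker (P n : X →ₗ[ℝ] X) : Set X)
    | succ m hm ih =>
        rw [calAN_succ_top A hm]
        exact (hbij m).comp ih
  -- construct the inverse maps V
  have hex : ∀ n k : ℕ, ∀ x : X, ∃ w : X, n ≤ k →
      w ∈ LinearMap.ker (P n : X →ₗ[ℝ] X) ∧ calAN A k n w = x - P k x := by
    intro n k x
    by_cases hnk : n ≤ k
    · obtain ⟨w, hw1, hw2⟩ := (hbijMN n k hnk).surjOn (hker k x)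
      exact ⟨w, fun _ => ⟨hw1, hw2⟩⟩
    · exact ⟨0, fun hc => absurd hc hnk⟩
  choose V hV using hex
  have hVmem : ∀ n k, n ≤ k → ∀ x : X, V n k x ∈ LinearMap.ker (P n : X →ₗ[ℝ] X) :=
    fun n k hk x => (hV n k x hk).1
  have hVeq : ∀ n k, n ≤ k → ∀ x : X, calAN A k n (V n k x) = x - P k x :=
    fun n k hk x => (hV n k x hk).2
  have hVb : ∀ n k, n ≤ k → ∀ x : X, ‖V n k x‖ ≤ C * E ^ (k - n) * ‖x‖ := by
    intro n k hk x
    have h1 := hV5 n k hk x (V n k x) (hVmem n k hk x) (hVeq n k hk x)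
    rwa [hexp n k hk] at h1
  have hVsub : ∀ n k, n ≤ k → ∀ x x' : X, V n k x - V n k x' = V n k (x - x') := by
    intro n k hk x x'
    apply (hbijMN n k hk).injOn
      (sub_mem (hVmem n k hk x) (hVmem n k hk x')) (hVmem n k hk (x - x'))
    rw [map_sub, hVeq n k hk x, hVeq n k hk x', hVeq n k hk (x - x'), map_sub]
    abel
  have hVstep : ∀ n k, n + 1 ≤ k → ∀ x : X, A n (V n k x) = V (n + 1) k x := by
    intro n k hk x
    apply (hbijMN (n + 1) k hk).injOn
      ((hbij n).mapsTo (hVmem n k (by omega) x)) (hVmem (n + 1) k hk x)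
    have hbot := calAN_succ_bot A (show n < k by omega)
    have h1 : calAN A k (n + 1) (A n (V n k x)) = calAN A k n (V n k x) := by
      rw [hbot]; rfl
    rw [h1, hVeq n k (by omega) x, hVeq (n + 1) k hk x]
  have hVtop : ∀ n, ∀ x : X, A n (V n (n + 1) x) = x - P (n + 1) x := by
    intro n x
    have h1 := hVeq n (n + 1) (by omega) x
    rw [calAN_succ_top A le_rfl, calAN_self] at h1
    simpa using h1
  have hSb : ∀ m n, n ≤ m → ∀ x : X, ‖calAN A m n (P n x)‖ ≤ C * E ^ (m - n) * ‖x‖ := by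
    intro m n hnm x
    have h1 : ‖((calAN A m n).comp (P n)) x‖ ≤ ‖(calAN A m n).comp (P n)‖ * ‖x‖ :=
      ContinuousLinearMap.le_opNorm _ _
    have h2 := mul_le_mul_of_nonneg_right (hS m n hnm) (norm_nonneg x)
    rw [hexp n m hnm] at h2
    exact le_trans h1 h2
  -- the constants
  set K : ℝ := 2 * C / (1 - E) with hKdef
  have hK0 : 0 < K := by
    apply div_pos (by linarith) h1E
  refine ⟨(1 - E) / (4 * C), by positivity, ?_⟩
  intro c hc hcc f hf ε hε
  refine ⟨ε * (1 - E) / (4 * C), by positivity, ?_⟩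
  intro y hy
  set δ : ℝ := ε * (1 - E) / (4 * C) with hδdef
  have hδ0 : 0 < δ := by positivity
  have hKδ : K * δ = ε / 2 := by
    rw [hKdef, hδdef]
    field_simp
    ring
  have hKc : K * c ≤ 1 / 2 := by
    have h1 : K * c ≤ K * ((1 - E) / (4 * C)) := mul_le_mul_of_nonneg_left hcc hK0.le
    have h2 : K * ((1 - E) / (4 * C)) = 1 / 2 := by
      rw [hKdef]
      field_simp
      ring
    linarith
  -- the perturbation sequence
  set hs : (ℕ →ᵇ X) → ℕ → X := fun u k =>
    f k (y k + u k) - f k (y k) - (y (k + 1) - (A k (y k) + f k (y k))) with hsdef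
  have hsb : ∀ (u : ℕ →ᵇ X) (k : ℕ), ‖hs u k‖ ≤ c * ‖u‖ + δ := by
    intro u k
    calc ‖hs u k‖ ≤ ‖f k (y k + u k) - f k (y k)‖
        + ‖y (k + 1) - (A k (y k) + f k (y k))‖ := norm_sub_le _ _
      _ ≤ c * ‖u k‖ + δ := by
          apply add_le_add _ (hy k)
          have := hf k (y k + u k) (y k)
          simpa using this
      _ ≤ c * ‖u‖ + δ := by
          have := mul_le_mul_of_nonneg_left (u.norm_coe_le_norm k) hc.le
          linarith
  have hsdb : ∀ (u v : ℕ →ᵇ X) (k : ℕ), ‖hs u k - hs v k‖ ≤ c * ‖u - v‖ := by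
    intro u v k
    have h1 : hs u k - hs v k = f k (y k + u k) - f k (y k + v k) := by
      simp only [hsdef]
      abel
    rw [h1]
    calc ‖f k (y k + u k) - f k (y k + v k)‖ ≤ c * ‖(y k + u k) - (y k + v k)‖ :=
          hf k _ _
      _ = c * ‖(u - v) k‖ := by
          congr 1
          simp only [BoundedContinuousFunction.coe_sub, Pi.sub_apply]
          congr 1
          abel
      _ ≤ c * ‖u - v‖ := mul_le_mul_of_nonneg_left ((u - v).norm_coe_le_norm k) hc.le
  -- the fixed point operator
  have hbnd : ∀ (u : ℕ →ᵇ X) (n : ℕ), ‖PhiFun A P V (hs u) n‖ ≤ K * (c * ‖u‖ + δ) :=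
    fun u n => bound_Phi hC.le hE0.le hE1 hVb hSb (hs u) _ (hsb u) n
  set T : (ℕ →ᵇ X) → (ℕ →ᵇ X) := fun u =>
    BoundedContinuousFunction.ofNormedAddCommGroupDiscrete (PhiFun A P V (hs u))
      (K * (c * ‖u‖ + δ)) (hbnd u) with hTdef
  have hTapp : ∀ (u : ℕ →ᵇ X) (n : ℕ), T u n = PhiFun A P V (hs u) n := fun u n => rfl
  have hdist : ∀ u v : ℕ →ᵇ X, dist (T u) (T v) ≤ (1 / 2) * dist u v := by
    intro u v
    rw [dist_eq_norm, dist_eq_norm]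
    have h2 : (0 : ℝ) ≤ (1 / 2) * ‖u - v‖ := by positivity
    apply (BoundedContinuousFunction.norm_le h2).2
    intro n
    simp only [BoundedContinuousFunction.coe_sub, Pi.sub_apply]
    rw [hTapp, hTapp, sub_Phi hC.le hE0.le hE1 hVb hVsub (hs u) (hs v)
      (c * ‖u‖ + δ) (c * ‖v‖ + δ) (hsb u) (hsb v) n]
    calc ‖PhiFun A P V (fun k => hs u k - hs v k) n‖ ≤ K * (c * ‖u - v‖) :=
          bound_Phi hC.le hE0.le hE1 hVb hSb _ _ (fun k => hsdb u v k) n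
      _ ≤ (1 / 2) * ‖u - v‖ := by
          rw [← mul_assoc]
          exact mul_le_mul_of_nonneg_right hKc (norm_nonneg _)
  haveI : Nonempty (ℕ →ᵇ X) := ⟨0⟩
  have hcontr : ContractingWith (1 / 2 : NNReal) T := by
    constructor
    · rw [← NNReal.coe_lt_coe]
      norm_num
    · apply LipschitzWith.of_dist_le_mul
      intro u v
      have := hdist u v
      rw [show ((1 / 2 : NNReal) : ℝ) = 1 / 2 by norm_num]
      exact this
  set z : ℕ →ᵇ X := ContractingWith.fixedPoint T hcontr with hzdef
  have hz : T z = z := hcontr.fixedPoint_isFixedPt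
  have hzn : ∀ n, z n = PhiFun A P V (hs z) n := by
    intro n
    conv_lhs => rw [← hz]
    exact hTapp z n
  have hznorm : ‖z‖ ≤ ε := by
    have hb0 : (0 : ℝ) ≤ K * (c * ‖z‖ + δ) := by positivity
    have h1 : ‖z‖ ≤ K * (c * ‖z‖ + δ) := by
      calc ‖z‖ = ‖T z‖ := by rw [hz]
        _ ≤ K * (c * ‖z‖ + δ) := (BoundedContinuousFunction.norm_le hb0).2
            (fun n => by rw [hTapp]; exact hbnd z n)
    have h2 : K * c * ‖z‖ ≤ (1 / 2) * ‖z‖ := mul_le_mul_of_nonneg_right hKc (norm_nonneg z)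
    rw [mul_add, ← mul_assoc, hKδ] at h1
    linarith
  have hrec : ∀ n, z (n + 1) = A n (z n) + hs z n := by
    intro n
    rw [hzn (n + 1), hzn n]
    exact rec_Phi hC.le hE0.le hE1 hVb hVstep hVtop (hs z) _ (hsb z) n
  refine ⟨fun n => y n + z n, ?_, ?_⟩
  · intro n
    have h1 := hrec n
    simp only [hsdef] at h1
    rw [map_add]
    change y (n + 1) + z (n + 1) = _
    rw [h1]
    abel
  · intro n
    simp only
    rw [add_sub_cancel_left]
    exact le_trans (z.norm_coe_le_norm n) hznorm
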